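/- Let X, Y, Z, W satisfy Z = αX + ε_Z, Y = βZ + ε_Y, W = γZ + ε_W with pairwise independent mean-zero errors ε_Z, ε_Y, ε_W independent of X. Then the partial regression coefficient r_{YX·W} = σ_{XY·W}/σ²_{X·W} equals αβ · (σ²_X/σ²_{X·W}) · (σ²_{Z·W}/σ²_Z), where partial (co)variances given W are defined by σ_{AB·W} = Cov(A,B) − Cov(A,W)Cov(W,B)/Var(W). -/

import Mathlib

open MeasureTheory ProbabilityTheory

/-- Covariance of two real random variables. -/
noncomputable def cov {Ω : Type*} [MeasurableSpace Ω] (μ : MeasureTheory.Measure Ω)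
    (f g : Ω → ℝ) : ℝ :=
  ∫ ω, (f ω - ∫ x, f x ∂μ) * (g ω - ∫ x, g x ∂μ) ∂μ


section Helpers
variable {Ω : Type*} [MeasurableSpace Ω] {μ : Measure Ω} [IsProbabilityMeasure μ] {f g : Ω → ℝ}


theorem int_mul (hf : MemLp f 2 μ) (hg : MemLp g 2 μ) :
    Integrable (fun ω => f ω * g ω) μ := by
  have h1 := hf.integrable_sq
  have h2 := hg.integrable_sq
  have hm : AEStronglyMeasurable (fun ω => f ω * g ω) μ :=
    hf.aestronglyMeasurable.mul hg.aestronglyMeasurable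
  refine Integrable.mono' ((h1.add h2).const_mul (1/2)) hm ?_
  filter_upwards with ω
  simp only [Pi.add_apply, Real.norm_eq_abs, abs_mul]
  nlinarith [sq_nonneg (|f ω| - |g ω|), sq_abs (f ω), sq_abs (g ω), abs_nonneg (f ω), abs_nonneg (g ω)]

theorem memℒp_center (hf : MemLp f 2 μ) : MemLp (fun ω => f ω - ∫ x, f x ∂μ) 2 μ :=
  hf.sub (memLp_const _)

theorem cov_sum {n : ℕ} (V : Fin n → Ω → ℝ) (hV : ∀ i, MemLp (V i) 2 μ) (c d : Fin n → ℝ) :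
    cov μ (fun ω => ∑ i, c i * V i ω) (fun ω => ∑ i, d i * V i ω) =
      ∑ i, ∑ j, c i * d j * cov μ (V i) (V j) := by
  have hint : ∀ i, Integrable (V i) μ := fun i => (hV i).integrable one_le_two
  have hm : ∀ (e : Fin n → ℝ), ∫ ω, (∑ i, e i * V i ω) ∂μ = ∑ i, e i * ∫ x, V i x ∂μ := by
    intro e
    rw [integral_finset_sum _ (fun i _ => (hint i).const_mul (e i))]
    simp [integral_const_mul]
  unfold cov
  rw [hm c, hm d]
  have hpt : ∀ ω, ((∑ i, c i * V i ω) - ∑ i, c i * ∫ x, V i x ∂μ) *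
      ((∑ i, d i * V i ω) - ∑ i, d i * ∫ x, V i x ∂μ) =
      ∑ i, ∑ j, c i * d j * ((V i ω - ∫ x, V i x ∂μ) * (V j ω - ∫ x, V j x ∂μ)) := by
    intro ω
    rw [← Finset.sum_sub_distrib, ← Finset.sum_sub_distrib, Finset.sum_mul_sum]
    congr 1; ext i; congr 1; ext j; ring
  simp_rw [hpt]
  rw [integral_finset_sum]
  · refine Finset.sum_congr rfl fun i _ => ?_
    rw [integral_finset_sum _ (fun j _ => ((int_mul (memℒp_center (hV i)) (memℒp_center (hV j)))).const_mul _)]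
    exact Finset.sum_congr rfl fun j _ => integral_const_mul _ _
  · intro i _
    exact integrable_finset_sum _ (fun j _ =>
      ((int_mul (memℒp_center (hV i)) (memℒp_center (hV j)))).const_mul _)

theorem cov_comm : cov μ f g = cov μ g f := by
  unfold cov; congr 1; ext ω; ring

theorem cov_indep (h : IndepFun f g μ) (hf : MemLp f 2 μ) (hg : MemLp g 2 μ) :
    cov μ f g = 0 := by
  have hif := hf.integrable one_le_two
  have hig := hg.integrable one_le_two
  have hmul := h.integral_mul_eq_mul_integral hf.aestronglyMeasurable hg.aestronglyMeasurable
  unfold cov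
  have : ∀ ω, (f ω - ∫ x, f x ∂μ) * (g ω - ∫ x, g x ∂μ) =
      f ω * g ω - (∫ x, f x ∂μ) * g ω - (∫ x, g x ∂μ) * f ω + (∫ x, f x ∂μ) * (∫ x, g x ∂μ) := by
    intro ω; ring
  simp_rw [this]
  rw [integral_add, integral_sub, integral_sub]
  · have hmul' : ∫ a, f a * g a ∂μ = (∫ x, f x ∂μ) * ∫ x, g x ∂μ := by
      simpa [Pi.mul_apply] using hmul
    simp [integral_const_mul, hmul']; ring
  · exact int_mul hf hg
  · exact hig.const_mul _
  · exact (int_mul hf hg).sub (hig.const_mul _)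
  · exact hif.const_mul _
  · exact ((int_mul hf hg).sub (hig.const_mul _)).sub (hif.const_mul _)
  · exact integrable_const _

end Helpers

/-- Partial covariance given `W`: `σ_{AB·W} = Cov(A,B) − Cov(A,W)Cov(W,B)/Var(W)`. -/
noncomputable def pcov {Ω : Type*} [MeasurableSpace Ω] (μ : MeasureTheory.Measure Ω)
    (f g w : Ω → ℝ) : ℝ :=
  cov μ f g - cov μ f w * cov μ w g / cov μ w w

/-- For `Z = αX + ε_Z`, `Y = βZ + ε_Y`, `W = γZ + ε_W` with pairwise independent
mean-zero errors independent of `X`: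
`r_{YX·W} = σ_{XY·W}/σ²_{X·W} = αβ · (σ²_X/σ²_{X·W}) · (σ²_{Z·W}/σ²_Z)`. -/
theorem stmt_6 {Ω : Type*} [MeasurableSpace Ω] (μ : MeasureTheory.Measure Ω)
    [IsProbabilityMeasure μ]
    (X eZ eY eW Z Y W : Ω → ℝ) (α β γ : ℝ)
    (hZ : Z = fun ω => α * X ω + eZ ω)
    (hY : Y = fun ω => β * Z ω + eY ω)
    (hW : W = fun ω => γ * Z ω + eW ω)
    (hX2 : MemLp X 2 μ) (heZ2 : MemLp eZ 2 μ) (heY2 : MemLp eY 2 μ) (heW2 : MemLp eW 2 μ)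
    (hZY : IndepFun eZ eY μ) (hZW : IndepFun eZ eW μ) (hYW : IndepFun eY eW μ)
    (hXZ : IndepFun X eZ μ) (hXY : IndepFun X eY μ) (hXW : IndepFun X eW μ)
    (hmZ : ∫ ω, eZ ω ∂μ = 0) (hmY : ∫ ω, eY ω ∂μ = 0) (hmW : ∫ ω, eW ω ∂μ = 0)
    (hvX : 0 < cov μ X X) (hveZ : 0 < cov μ eZ eZ) (hveY : 0 < cov μ eY eY)
    (hveW : 0 < cov μ eW eW)
    (hvW : cov μ W W ≠ 0) (hvZ : cov μ Z Z ≠ 0)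
    (hpX : pcov μ X X W ≠ 0) :
    pcov μ X Y W / pcov μ X X W =
      α * β * (cov μ X X / pcov μ X X W) * (pcov μ Z Z W / cov μ Z Z) := by
  set V : Fin 4 → Ω → ℝ := ![X, eZ, eY, eW] with hVdef
  have hV : ∀ i, MemLp (V i) 2 μ := by
    intro i; fin_cases i <;> simpa [hVdef]
  have z01 : cov μ X eZ = 0 := cov_indep hXZ hX2 heZ2
  have z02 : cov μ X eY = 0 := cov_indep hXY hX2 heY2
  have z03 : cov μ X eW = 0 := cov_indep hXW hX2 heW2
  have z12 : cov μ eZ eY = 0 := cov_indep hZY heZ2 heY2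
  have z13 : cov μ eZ eW = 0 := cov_indep hZW heZ2 heW2
  have z23 : cov μ eY eW = 0 := cov_indep hYW heY2 heW2
  have z10 : cov μ eZ X = 0 := cov_indep hXZ.symm heZ2 hX2
  have z20 : cov μ eY X = 0 := cov_indep hXY.symm heY2 hX2
  have z30 : cov μ eW X = 0 := cov_indep hXW.symm heW2 hX2
  have z21 : cov μ eY eZ = 0 := cov_indep hZY.symm heY2 heZ2
  have z31 : cov μ eW eZ = 0 := cov_indep hZW.symm heW2 heZ2
  have z32 : cov μ eW eY = 0 := cov_indep hYW.symm heW2 heY2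
  have hXe : X = fun ω => ∑ i, (![(1:ℝ),0,0,0]) i * V i ω := by
    funext ω; simp [hVdef, Fin.sum_univ_four]
  have hZe : Z = fun ω => ∑ i, (![α,(1:ℝ),0,0]) i * V i ω := by
    funext ω; simp [hZ, hVdef, Fin.sum_univ_four]
  have hYe : Y = fun ω => ∑ i, (![α*β,β,(1:ℝ),0]) i * V i ω := by
    funext ω; simp [hY, hZ, hVdef, Fin.sum_univ_four]; ring
  have hWe : W = fun ω => ∑ i, (![α*γ,γ,0,(1:ℝ)]) i * V i ω := by
    funext ω; simp [hW, hZ, hVdef, Fin.sum_univ_four]; ring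
  have covv : ∀ (c d : Fin 4 → ℝ), cov μ (fun ω => ∑ i, c i * V i ω)
      (fun ω => ∑ i, d i * V i ω) = ∑ i, ∑ j, c i * d j * cov μ (V i) (V j) :=
    fun c d => cov_sum V hV c d
  have covZZ : cov μ Z Z = α^2 * cov μ X X + cov μ eZ eZ := by
    conv_lhs => rw [hZe]
    rw [covv]
    simp only [hVdef, Fin.sum_univ_four, Matrix.cons_val_zero, Matrix.cons_val_one,
      Matrix.head_cons, Matrix.cons_val_two, Matrix.tail_cons, Matrix.cons_val_three,
      z01, z02, z03, z10, z12, z13, z20, z21, z23, z30, z31, z32]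
    ring
  have covXY : cov μ X Y = α * β * cov μ X X := by
    conv_lhs => rw [hXe, hYe]
    rw [covv]
    simp only [hVdef, Fin.sum_univ_four, Matrix.cons_val_zero, Matrix.cons_val_one,
      Matrix.head_cons, Matrix.cons_val_two, Matrix.tail_cons, Matrix.cons_val_three,
      z01, z02, z03, z10, z12, z13, z20, z21, z23, z30, z31, z32]
    ring
  have covXW : cov μ X W = α * γ * cov μ X X := by
    conv_lhs => rw [hXe, hWe]
    rw [covv]
    simp only [hVdef, Fin.sum_univ_four, Matrix.cons_val_zero, Matrix.cons_val_one,
      Matrix.head_cons, Matrix.cons_val_two, Matrix.tail_cons, Matrix.cons_val_three,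
      z01, z02, z03, z10, z12, z13, z20, z21, z23, z30, z31, z32]
    ring
  have covWX : cov μ W X = α * γ * cov μ X X := by
    conv_lhs => rw [hXe, hWe]
    rw [covv]
    simp only [hVdef, Fin.sum_univ_four, Matrix.cons_val_zero, Matrix.cons_val_one,
      Matrix.head_cons, Matrix.cons_val_two, Matrix.tail_cons, Matrix.cons_val_three,
      z01, z02, z03, z10, z12, z13, z20, z21, z23, z30, z31, z32]
    ring
  have covWY : cov μ W Y = β * γ * cov μ Z Z := by
    conv_lhs => rw [hYe, hWe]
    rw [covv, covZZ]
    simp only [hVdef, Fin.sum_univ_four, Matrix.cons_val_zero, Matrix.cons_val_one,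
      Matrix.head_cons, Matrix.cons_val_two, Matrix.tail_cons, Matrix.cons_val_three,
      z01, z02, z03, z10, z12, z13, z20, z21, z23, z30, z31, z32]
    ring
  have covZW : cov μ Z W = γ * cov μ Z Z := by
    conv_lhs => rw [hZe, hWe]
    rw [covv, covZZ]
    simp only [hVdef, Fin.sum_univ_four, Matrix.cons_val_zero, Matrix.cons_val_one,
      Matrix.head_cons, Matrix.cons_val_two, Matrix.tail_cons, Matrix.cons_val_three,
      z01, z02, z03, z10, z12, z13, z20, z21, z23, z30, z31, z32]
    ring
  have covWZ : cov μ W Z = γ * cov μ Z Z := by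
    conv_lhs => rw [hZe, hWe]
    rw [covv, covZZ]
    simp only [hVdef, Fin.sum_univ_four, Matrix.cons_val_zero, Matrix.cons_val_one,
      Matrix.head_cons, Matrix.cons_val_two, Matrix.tail_cons, Matrix.cons_val_three,
      z01, z02, z03, z10, z12, z13, z20, z21, z23, z30, z31, z32]
    ring
  have hpXX : pcov μ X X W = cov μ X X - (α * γ * cov μ X X) * (α * γ * cov μ X X) / cov μ W W := by
    rw [pcov, covXW, covWX]
  have hpXY : pcov μ X Y W = α * β * cov μ X X
      - (α * γ * cov μ X X) * (β * γ * cov μ Z Z) / cov μ W W := by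
    rw [pcov, covXY, covXW, covWY]
  have hpZZ : pcov μ Z Z W = cov μ Z Z - (γ * cov μ Z Z) * (γ * cov μ Z Z) / cov μ W W := by
    rw [pcov, covZW, covWZ]
  have hpX' := hpX
  rw [hpXX] at hpX'
  have hD : cov μ X X * cov μ W W - α * γ * cov μ X X * (α * γ * cov μ X X) ≠ 0 := by
    have hrw : cov μ X X * cov μ W W - α * γ * cov μ X X * (α * γ * cov μ X X) =
        (cov μ X X - α * γ * cov μ X X * (α * γ * cov μ X X) / cov μ W W) * cov μ W W := by
      field_simp
    rw [hrw]
    exact mul_ne_zero hpX' hvW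
  rw [hpXY, hpZZ, hpXX]
  field_simp [hD]
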